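/- arXiv:2602.21258 — 3 statements merged into one kernel-verified Lean document; each statement's English description precedes it below -/
import Mathlib

section
/- For X ∈ 𝒫_J and t ∈ ℝ, the matrix (X^{-1})^t_J equals (X^t_J)^{-1}. -/
open Matrix
open scoped ComplexOrder

noncomputable def sigJ (p q : ℕ) : Matrix (Fin p ⊕ Fin q) (Fin p ⊕ Fin q) ℂ :=
  Matrix.fromBlocks 1 0 0 (-1)

/-- Real power of a matrix via the continuous functional calculus; for a positive definite
matrix this is the usual power. -/
noncomputable def mpow {p q : ℕ} (A : Matrix (Fin p ⊕ Fin q) (Fin p ⊕ Fin q) ℂ) (t : ℝ) :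
    Matrix (Fin p ⊕ Fin q) (Fin p ⊕ Fin q) ℂ :=
  cfc (fun x : ℝ => x ^ t) A

/-- The J-power `X^t_J := J·(J X)^t`. -/
noncomputable def Jpow {p q : ℕ} (X : Matrix (Fin p ⊕ Fin q) (Fin p ⊕ Fin q) ℂ) (t : ℝ) :
    Matrix (Fin p ⊕ Fin q) (Fin p ⊕ Fin q) ℂ :=
  sigJ p q * mpow (sigJ p q * X) t

lemma sigJ_mul_self (p q : ℕ) : sigJ p q * sigJ p q = 1 := by
  simp [sigJ, Matrix.fromBlocks_multiply, ← Matrix.fromBlocks_one]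

lemma sigJ_inv (p q : ℕ) : (sigJ p q)⁻¹ = sigJ p q :=
  Matrix.inv_eq_right_inv (sigJ_mul_self p q)

lemma sigJ_conjTranspose (p q : ℕ) : (sigJ p q)ᴴ = sigJ p q := by
  simp [sigJ, Matrix.fromBlocks_conjTranspose]

/-- Conjugation by `J` as a star algebra homomorphism. -/
noncomputable def conjJ (p q : ℕ) :
    Matrix (Fin p ⊕ Fin q) (Fin p ⊕ Fin q) ℂ →⋆ₐ[ℂ] Matrix (Fin p ⊕ Fin q) (Fin p ⊕ Fin q) ℂ where
  toFun Y := sigJ p q * Y * sigJ p q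
  map_one' := by
    show sigJ p q * 1 * sigJ p q = 1
    rw [mul_one, sigJ_mul_self]
  map_mul' Y Z := by
    show sigJ p q * (Y * Z) * sigJ p q = (sigJ p q * Y * sigJ p q) * (sigJ p q * Z * sigJ p q)
    calc sigJ p q * (Y * Z) * sigJ p q
        = sigJ p q * Y * 1 * Z * sigJ p q := by rw [mul_one]; noncomm_ring
      _ = sigJ p q * Y * (sigJ p q * sigJ p q) * Z * sigJ p q := by rw [sigJ_mul_self]
      _ = (sigJ p q * Y * sigJ p q) * (sigJ p q * Z * sigJ p q) := by noncomm_ring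
  map_zero' := by simp
  map_add' Y Z := by noncomm_ring
  commutes' c := by
    show sigJ p q * algebraMap ℂ _ c * sigJ p q = algebraMap ℂ _ c
    rw [Algebra.algebraMap_eq_smul_one, mul_smul_comm, smul_mul_assoc, mul_one, sigJ_mul_self]
  map_star' Y := by
    show sigJ p q * star Y * sigJ p q = star (sigJ p q * Y * sigJ p q)
    simp only [Matrix.star_eq_conjTranspose, Matrix.conjTranspose_mul, sigJ_conjTranspose,
      mul_assoc]

lemma conjJ_apply (p q : ℕ) (Y : Matrix (Fin p ⊕ Fin q) (Fin p ⊕ Fin q) ℂ) :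
    conjJ p q Y = sigJ p q * Y * sigJ p q := rfl

lemma conjJ_continuous (p q : ℕ) : Continuous (conjJ p q) := by
  show Continuous fun Y => sigJ p q * Y * sigJ p q
  fun_prop

lemma spectrum_pos {p q : ℕ} {A : Matrix (Fin p ⊕ Fin q) (Fin p ⊕ Fin q) ℂ} (hA : A.PosDef) :
    ∀ x ∈ spectrum ℝ A, 0 < x := by
  intro x hx
  rw [Matrix.IsHermitian.spectrum_real_eq_range_eigenvalues hA.isHermitian] at hx
  obtain ⟨i, rfl⟩ := hx
  exact hA.eigenvalues_pos i

lemma continuousOn_rpow_spectrum {p q : ℕ} {A : Matrix (Fin p ⊕ Fin q) (Fin p ⊕ Fin q) ℂ}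
    (hA : A.PosDef) (t : ℝ) : ContinuousOn (fun x : ℝ => x ^ t) (spectrum ℝ A) := fun x hx =>
  (Real.continuousAt_rpow_const x t (Or.inl (spectrum_pos hA x hx).ne')).continuousWithinAt

/-- For a positive definite matrix, `mpow` commutes with inversion. -/
lemma mpow_inv {p q : ℕ} {A : Matrix (Fin p ⊕ Fin q) (Fin p ⊕ Fin q) ℂ} (hA : A.PosDef)
    (t : ℝ) : mpow A⁻¹ t = (mpow A t)⁻¹ := by
  have hsa : IsSelfAdjoint A := hA.isHermitian
  have hU : IsUnit A := hA.isUnit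
  have hsp := spectrum_pos hA
  have hspi := spectrum_pos hA.inv
  have hcont := continuousOn_rpow_spectrum hA t
  have hconti := continuousOn_rpow_spectrum hA.inv t
  have hcoe : ((hU.unit⁻¹ : _ˣ) : Matrix (Fin p ⊕ Fin q) (Fin p ⊕ Fin q) ℂ) = A⁻¹ := by
    rw [Matrix.coe_units_inv, IsUnit.unit_spec]
  have h1 : mpow A⁻¹ t = cfc (fun x : ℝ => (x⁻¹) ^ t) A := by
    rw [mpow, ← hcoe, ← cfc_comp_inv (fun x : ℝ => x ^ t) hU.unit ?hc ?hs]
    case hc =>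
      intro x hx
      obtain ⟨y, hy, rfl⟩ := hx
      simp only [IsUnit.unit_spec] at hy
      exact (Real.continuousAt_rpow_const _ t
        (Or.inl (inv_pos.mpr (hsp y hy)).ne')).continuousWithinAt
    case hs => simpa using hsa
    · simp
  rw [h1]
  have h2 : cfc (fun x : ℝ => (x⁻¹) ^ t) A = cfc (fun x : ℝ => (x ^ t)⁻¹) A := by
    refine cfc_congr fun x hx => ?_
    exact Real.inv_rpow (hsp x hx).le t
  rw [h2, cfc_inv (fun x : ℝ => x ^ t) A
    (fun x hx => (Real.rpow_pos_of_pos (hsp x hx) t).ne') (continuousOn_rpow_spectrum hA t) hsa,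
    mpow, ← Matrix.nonsing_inv_eq_ringInverse]

/-- For `X ∈ 𝒫_J` and `t ∈ ℝ`, `(X⁻¹)^t_J = (X^t_J)⁻¹`. -/
theorem stmt12 (p q : ℕ) (X : Matrix (Fin p ⊕ Fin q) (Fin p ⊕ Fin q) ℂ)
    (hX : Xᴴ = sigJ p q * X * sigJ p q) (hpos : (sigJ p q * X).PosDef) (t : ℝ) :
    Jpow X⁻¹ t = (Jpow X t)⁻¹ := by
  set J := sigJ p q with hJ
  have hJ2 : J * J = 1 := sigJ_mul_self p q
  have hJinv : J⁻¹ = J := sigJ_inv p q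
  set A := J * X with hA
  have hXA : X = J * A := by rw [hA, ← mul_assoc, hJ2, one_mul]
  have hAinv : X⁻¹ = A⁻¹ * J := by rw [hXA, Matrix.mul_inv_rev, hJinv]
  have hJXinv : J * X⁻¹ = conjJ p q A⁻¹ := by
    rw [hAinv, conjJ_apply, ← mul_assoc]
  have hsaAi : IsSelfAdjoint A⁻¹ := hpos.inv.isHermitian
  have hsaφ : IsSelfAdjoint (conjJ p q A⁻¹) := hsaAi.map (conjJ p q)
  have hmap : mpow (conjJ p q A⁻¹) t = conjJ p q (mpow A⁻¹ t) := by
    rw [mpow, mpow]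
    exact (StarAlgHomClass.map_cfc (conjJ p q) (fun x : ℝ => x ^ t) A⁻¹
      (continuousOn_rpow_spectrum hpos.inv t) (conjJ_continuous p q) hsaAi hsaφ).symm
  have lhs : Jpow X⁻¹ t = (mpow A t)⁻¹ * J := by
    rw [Jpow, ← hJ, hJXinv, hmap, mpow_inv hpos, conjJ_apply, ← mul_assoc, ← mul_assoc, hJ2,
      one_mul]
  have rhs : (Jpow X t)⁻¹ = (mpow A t)⁻¹ * J := by
    rw [Jpow, ← hJ, ← hA, Matrix.mul_inv_rev, hJinv]
  rw [lhs, rhs]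
end

section
/- For every g ∈ GL(n,ℂ) and X ∈ 𝒫_J, the matrix g X g^♯ lies in 𝒫_J, where g^♯ = J g* J. Moreover the action g·X := g X g^♯ of GL(n,ℂ) on 𝒫_J is transitive: for every X ∈ 𝒫_J there exists g with X = g J g^♯. -/
open Matrix
open scoped ComplexOrder

lemma posDef_congr {n : Type*} [Fintype n] [DecidableEq n] {A B : Matrix n n ℂ}
    (hA : A.PosDef) (hB : IsUnit B) : (B * A * Bᴴ).PosDef := by
  rw [posDef_iff_dotProduct_mulVec]
  refine ⟨?_, fun x hx => ?_⟩
  · have : (B * A * Bᴴ)ᴴ = B * Aᴴ * Bᴴ := by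
      simp [conjTranspose_mul, mul_assoc]
    rw [Matrix.IsHermitian, this, hA.1.eq]
  · have hBH : IsUnit Bᴴ := by
      rw [Matrix.isUnit_iff_isUnit_det] at hB ⊢
      simpa using hB
    have hxn : Bᴴ *ᵥ x ≠ 0 := by
      intro h
      have := Matrix.mulVec_injective_iff_isUnit.2 hBH
      exact hx (by simpa [Matrix.mulVec_zero] using this (by simpa using h))
    have := hA.dotProduct_mulVec_pos hxn
    simpa only [star_mulVec, dotProduct_mulVec, vecMul_vecMul,
      Matrix.conjTranspose_conjTranspose] using this

/-- For `g ∈ GL(n,ℂ)` and `X ∈ 𝒫_J`, `g X g^♯ ∈ 𝒫_J` (with `g^♯ = J g* J`), and the action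
`g·X := g X g^♯` is transitive: every `X ∈ 𝒫_J` is of the form `g J g^♯`. -/
theorem stmt13 (p q : ℕ) :
    (∀ g X : Matrix (Fin p ⊕ Fin q) (Fin p ⊕ Fin q) ℂ, IsUnit g →
      Xᴴ = sigJ p q * X * sigJ p q → (sigJ p q * X).PosDef →
      ((g * X * (sigJ p q * gᴴ * sigJ p q))ᴴ =
          sigJ p q * (g * X * (sigJ p q * gᴴ * sigJ p q)) * sigJ p q ∧
        (sigJ p q * (g * X * (sigJ p q * gᴴ * sigJ p q))).PosDef)) ∧
    (∀ X : Matrix (Fin p ⊕ Fin q) (Fin p ⊕ Fin q) ℂ,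
      Xᴴ = sigJ p q * X * sigJ p q → (sigJ p q * X).PosDef →
      ∃ g : Matrix (Fin p ⊕ Fin q) (Fin p ⊕ Fin q) ℂ, IsUnit g ∧
        X = g * sigJ p q * (sigJ p q * gᴴ * sigJ p q)) := by
  set J := sigJ p q with hJdef
  have hJH : Jᴴ = J := by
    simp [hJdef, sigJ, Matrix.fromBlocks_conjTranspose]
  have hJJ : J * J = 1 := by
    simp [hJdef, sigJ, Matrix.fromBlocks_multiply]
  have hJunit : IsUnit J := by
    rw [Matrix.isUnit_iff_isUnit_det]
    exact IsUnit.of_mul_eq_one _ (by rw [← Matrix.det_mul, hJJ, Matrix.det_one])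
  constructor
  · intro g X hg hX hJX
    constructor
    · have e1 : (g * X * (J * gᴴ * J))ᴴ = J * (g * (J * (Xᴴ * gᴴ))) := by
        simp only [conjTranspose_mul, hJH, conjTranspose_conjTranspose, mul_assoc]
      rw [e1, hX]
      simp only [mul_assoc]
      simp only [← mul_assoc J J, hJJ, one_mul, mul_one]
    · have key : J * (g * X * (J * gᴴ * J)) = (J * g * J) * (J * X) * (J * g * J)ᴴ := by
        simp only [conjTranspose_mul, hJH, conjTranspose_conjTranspose, mul_assoc]
        simp only [← mul_assoc J J, hJJ, one_mul]
      rw [key]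
      exact posDef_congr hJX ((hJunit.mul hg).mul hJunit)
  · intro X hX hJX
    have hs := hJX.posSemidef
    obtain ⟨h, hHerm, hhh⟩ : ∃ h : Matrix (Fin p ⊕ Fin q) (Fin p ⊕ Fin q) ℂ,
        hᴴ = h ∧ h * h = J * X := by
      open scoped MatrixOrder in
      exact ⟨CFC.sqrt (J * X), (Matrix.nonneg_iff_posSemidef.mp (CFC.sqrt_nonneg _)).1,
        CFC.sqrt_mul_sqrt_self _ (Matrix.nonneg_iff_posSemidef.mpr hs)⟩
    have hdet : IsUnit h := by
      rw [Matrix.isUnit_iff_isUnit_det]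
      have : h.det * h.det = (J * X).det := by rw [← Matrix.det_mul, hhh]
      have hne : (J * X).det ≠ 0 := ne_of_gt hJX.det_pos
      exact isUnit_iff_ne_zero.mpr (fun h0 => hne (by rw [← this, h0, zero_mul]))
    refine ⟨J * h, hJunit.mul hdet, ?_⟩
    have : J * h * J * (J * (J * h)ᴴ * J) = J * (h * h) := by
      simp only [conjTranspose_mul, hJH, hHerm, mul_assoc]
      simp only [← mul_assoc J J, hJJ, one_mul]
      simp [mul_assoc, ← mul_assoc J J, hJJ]
    rw [this, hhh, ← mul_assoc, hJJ, one_mul]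
end

section
/- For A, B ∈ 𝒫_J, the J-geometric mean A ♯^J B := A^{1/2}_J • (A^{-1/2}_J • B • A^{-1/2}_J)^{1/2}_J • A^{1/2}_J lies in 𝒫_J and is the unique solution X ∈ 𝒫_J of the Riccati-type equation X A^{-1} X = B. -/
open Matrix
open scoped ComplexOrder

/-- The J-geometric mean `A ♯^J B = A^{1/2}_J • (A^{-1/2}_J • B • A^{-1/2}_J)^{1/2}_J • A^{1/2}_J`
(where `X • Y = X J Y`). -/
noncomputable def sharpJ {p q : ℕ} (A B : Matrix (Fin p ⊕ Fin q) (Fin p ⊕ Fin q) ℂ) :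
    Matrix (Fin p ⊕ Fin q) (Fin p ⊕ Fin q) ℂ :=
  Jpow A (1 / 2) * sigJ p q *
    Jpow (Jpow A (-(1 / 2)) * sigJ p q * B * sigJ p q * Jpow A (-(1 / 2))) (1 / 2) *
    sigJ p q * Jpow A (1 / 2)


variable {n : Type*} [Fintype n] [DecidableEq n]

lemma contOn (f : ℝ → ℝ) (P : Matrix n n ℂ) : ContinuousOn f (spectrum ℝ P) := by
  rw [continuousOn_iff_continuous_restrict]; fun_prop

lemma spec_pos {P : Matrix n n ℂ} (hP : P.PosDef) : ∀ x ∈ spectrum ℝ P, 0 < x := by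
  intro x hx
  obtain ⟨i, rfl⟩ := hP.isHermitian.spectrum_real_eq_range_eigenvalues ▸ hx
  exact hP.eigenvalues_pos i

lemma mpow_mul_mpow {P : Matrix n n ℂ} (hP : P.PosDef) (s t : ℝ) :
    cfc (fun x : ℝ => x ^ s) P * cfc (fun x : ℝ => x ^ t) P = cfc (fun x : ℝ => x ^ (s + t)) P := by
  rw [← cfc_mul _ _ _ (contOn _ _) (contOn _ _)]
  exact cfc_congr fun x hx => (Real.rpow_add (spec_pos hP x hx) s t).symm

lemma mpow_one' {P : Matrix n n ℂ} (hP : P.PosDef) :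
    cfc (fun x : ℝ => x ^ (1:ℝ)) P = P := by
  calc cfc (fun x : ℝ => x ^ (1:ℝ)) P = cfc (fun x : ℝ => x) P :=
        cfc_congr fun x _ => Real.rpow_one x
    _ = P := cfc_id' ℝ P hP.isHermitian

lemma posDef_conj {D N : Matrix n n ℂ} (hD : D.PosDef) (hN : IsUnit N) :
    (N * D * Nᴴ).PosDef := by
  refine Matrix.PosDef.of_dotProduct_mulVec_pos ?_ ?_
  · have := Matrix.isHermitian_conjTranspose_mul_mul Nᴴ hD.isHermitian
    simpa using this
  · intro x hx
    have hx' : Nᴴ *ᵥ x ≠ 0 := by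
      have hinj : Function.Injective (Nᴴ).mulVec :=
        Matrix.mulVec_injective_iff_isUnit.2 (by simpa using hN.map (conjTransposeRingEquiv n ℂ))
      intro h
      exact hx (hinj (by simpa using h))
    have := hD.dotProduct_mulVec_pos hx'
    simpa only [star_mulVec, dotProduct_mulVec, vecMul_vecMul, conjTranspose_conjTranspose] using this

lemma cfc_posDef {P : Matrix n n ℂ} (hP : P.PosDef) {f : ℝ → ℝ}
    (hf : ∀ x ∈ spectrum ℝ P, 0 < f x) : (cfc f P).PosDef := by
  have h := hP.isHermitian
  rw [h.cfc_eq f, Matrix.IsHermitian.cfc]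
  have hd : (Matrix.diagonal (RCLike.ofReal ∘ f ∘ h.eigenvalues) : Matrix n n ℂ).PosDef := by
    rw [Matrix.posDef_diagonal_iff]
    intro i
    have : h.eigenvalues i ∈ spectrum ℝ P := by
      rw [h.spectrum_real_eq_range_eigenvalues]; exact ⟨i, rfl⟩
    have h0 : (0:ℝ) < f (h.eigenvalues i) := hf _ this
    show (0:ℂ) < ((f (h.eigenvalues i) : ℝ) : ℂ)
    exact_mod_cast h0
  have hu : IsUnit (h.eigenvectorUnitary : Matrix n n ℂ) :=
    (Unitary.toUnits h.eigenvectorUnitary).isUnit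
  have := posDef_conj hd hu
  simpa [star_eq_conjTranspose] using this

section core
variable {P Q : Matrix n n ℂ} (hP : P.PosDef) (hQ : Q.PosDef)

lemma mpow_posDef (hP : P.PosDef) (t : ℝ) : (cfc (fun x : ℝ => x ^ t) P).PosDef :=
  cfc_posDef hP fun x hx => Real.rpow_pos_of_pos (spec_pos hP x hx) t

lemma mpow_herm (P : Matrix n n ℂ) (t : ℝ) : (cfc (fun x : ℝ => x ^ t) P).IsHermitian :=
  cfc_predicate _ P

lemma mpow_half_mul_neg_half (hP : P.PosDef) :
    cfc (fun x : ℝ => x ^ (1/2 : ℝ)) P * cfc (fun x : ℝ => x ^ (-(1/2) : ℝ)) P = 1 := by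
  rw [mpow_mul_mpow hP, show ((1:ℝ)/2 + -(1/2)) = 0 by norm_num]
  calc cfc (fun x : ℝ => x ^ (0:ℝ)) P = cfc (fun _ : ℝ => (1:ℝ)) P :=
        cfc_congr fun x _ => Real.rpow_zero x
    _ = 1 := cfc_const_one ℝ P hP.isHermitian

lemma mpow_neg_half_mul_half (hP : P.PosDef) :
    cfc (fun x : ℝ => x ^ (-(1/2) : ℝ)) P * cfc (fun x : ℝ => x ^ (1/2 : ℝ)) P = 1 := by
  rw [mpow_mul_mpow hP, show (-((1:ℝ)/2) + 1/2) = 0 by norm_num]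
  calc cfc (fun x : ℝ => x ^ (0:ℝ)) P = cfc (fun _ : ℝ => (1:ℝ)) P :=
        cfc_congr fun x _ => Real.rpow_zero x
    _ = 1 := cfc_const_one ℝ P hP.isHermitian

lemma mpow_half_sq (hP : P.PosDef) :
    cfc (fun x : ℝ => x ^ (1/2 : ℝ)) P * cfc (fun x : ℝ => x ^ (1/2 : ℝ)) P = P := by
  rw [mpow_mul_mpow hP, show ((1:ℝ)/2 + 1/2) = 1 by norm_num]
  exact mpow_one' hP

noncomputable def geo (P Q : Matrix n n ℂ) : Matrix n n ℂ :=
  cfc (fun x : ℝ => x ^ (1/2 : ℝ)) P *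
    cfc (fun x : ℝ => x ^ (1/2 : ℝ))
      (cfc (fun x : ℝ => x ^ (-(1/2) : ℝ)) P * Q * cfc (fun x : ℝ => x ^ (-(1/2) : ℝ)) P) *
    cfc (fun x : ℝ => x ^ (1/2 : ℝ)) P


lemma conj_posDef (hP : P.PosDef) (hQ : Q.PosDef) (t : ℝ) :
    (cfc (fun x : ℝ => x ^ t) P * Q * cfc (fun x : ℝ => x ^ t) P).PosDef := by
  have h := (mpow_herm P t).eq
  nth_rewrite 2 [← h]
  exact posDef_conj hQ (mpow_posDef hP t).isUnit

lemma geo_posDef (hP : P.PosDef) (hQ : Q.PosDef) : (geo P Q).PosDef := by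
  unfold geo
  have h := (mpow_herm P (1/2 : ℝ)).eq
  nth_rewrite 2 [← h]
  exact posDef_conj (mpow_posDef (conj_posDef hP hQ _) _) (mpow_posDef hP _).isUnit

lemma Pinv_eq (hP : P.PosDef) :
    P⁻¹ = cfc (fun x : ℝ => x ^ (-(1/2) : ℝ)) P * cfc (fun x : ℝ => x ^ (-(1/2) : ℝ)) P := by
  apply Matrix.inv_eq_right_inv
  nth_rewrite 1 [← mpow_half_sq hP]
  rw [Matrix.mul_assoc, ← Matrix.mul_assoc (cfc (fun x : ℝ => x ^ (1/2 : ℝ)) P)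
    (cfc (fun x : ℝ => x ^ (-(1/2) : ℝ)) P), mpow_half_mul_neg_half hP, Matrix.one_mul,
    mpow_half_mul_neg_half hP]

lemma geo_riccati (hP : P.PosDef) (hQ : Q.PosDef) : geo P Q * P⁻¹ * geo P Q = Q := by
  set R := cfc (fun x : ℝ => x ^ (1/2 : ℝ)) P with hR
  set M := cfc (fun x : ℝ => x ^ (-(1/2) : ℝ)) P with hM
  set S := cfc (fun x : ℝ => x ^ (1/2 : ℝ)) (M * Q * M) with hS
  have hRM : ∀ X : Matrix n n ℂ, R * (M * X) = X := fun X => by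
    rw [← Matrix.mul_assoc, mpow_half_mul_neg_half hP, Matrix.one_mul]
  have hMR : ∀ X : Matrix n n ℂ, M * (R * X) = X := fun X => by
    rw [← Matrix.mul_assoc, mpow_neg_half_mul_half hP, Matrix.one_mul]
  have hSS : ∀ X : Matrix n n ℂ, S * (S * X) = M * (Q * (M * X)) := fun X => by
    rw [← Matrix.mul_assoc, mpow_half_sq (conj_posDef hP hQ _), Matrix.mul_assoc,
      Matrix.mul_assoc]
  rw [Pinv_eq hP]
  show R * S * R * (M * M) * (R * S * R) = Q
  simp only [Matrix.mul_assoc, hRM, hMR, hSS, ← hM]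
  rw [show M * R = (1 : Matrix n n ℂ) from mpow_neg_half_mul_half hP, Matrix.mul_one]

lemma geo_unique (hP : P.PosDef) (hQ : Q.PosDef) {X : Matrix n n ℂ} (hX : X.PosDef)
    (hric : X * P⁻¹ * X = Q) : X = geo P Q := by
  set R := cfc (fun x : ℝ => x ^ (1/2 : ℝ)) P with hR
  set M := cfc (fun x : ℝ => x ^ (-(1/2) : ℝ)) P with hM
  have hRM : R * M = 1 := mpow_half_mul_neg_half hP
  have hMR : M * R = 1 := mpow_neg_half_mul_half hP
  have hMH : Mᴴ = M := (mpow_herm P _).eq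
  set C := M * Q * M with hC
  set S := cfc (fun x : ℝ => x ^ (1/2 : ℝ)) C with hS
  have hCpos : C.PosDef := conj_posDef hP hQ _
  set Y := M * X * M with hY
  have hYpos : Y.PosDef := by
    rw [hY]; nth_rewrite 2 [← hMH]
    exact posDef_conj hX (Matrix.isUnit_iff_isUnit_det M |>.mpr
      (by
        have := hMR
        exact IsUnit.of_mul_eq_one _ (by
          have := congrArg Matrix.det hMR
          simpa [Matrix.det_mul] using this)))
  have hsq : Y ^ 2 = S ^ 2 := by
    rw [pow_two, pow_two, show S * S = C from mpow_half_sq hCpos, hY, hC]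
    calc M * X * M * (M * X * M) = M * (X * (M * M) * X) * M := by
          simp only [Matrix.mul_assoc]
      _ = M * Q * M := by rw [← Pinv_eq hP, hric]
  have hYS : Y = S := by
    open scoped MatrixOrder in
    exact (CFC.sq_eq_sq_iff Y S hYpos.posSemidef.nonneg (mpow_posDef hCpos _).posSemidef.nonneg).1 hsq
  have : R * Y * R = X := by
    rw [hY]
    calc R * (M * X * M) * R = (R * M) * X * (M * R) := by simp only [Matrix.mul_assoc]
      _ = X := by rw [hRM, hMR, Matrix.one_mul, Matrix.mul_one]
  rw [← this, hYS]
  rfl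

lemma geo_herm (hP : P.PosDef) (hQ : Q.PosDef) : (geo P Q).IsHermitian :=
  (geo_posDef hP hQ).isHermitian

end core

/-- For `A, B ∈ 𝒫_J`, the J-geometric mean lies in `𝒫_J` and is the unique solution in `𝒫_J`
of the Riccati-type equation `X A⁻¹ X = B`. -/
theorem stmt17 (p q : ℕ) (A B : Matrix (Fin p ⊕ Fin q) (Fin p ⊕ Fin q) ℂ)
    (hA : Aᴴ = sigJ p q * A * sigJ p q) (hposA : (sigJ p q * A).PosDef)
    (hB : Bᴴ = sigJ p q * B * sigJ p q) (hposB : (sigJ p q * B).PosDef) :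
    ((sharpJ A B)ᴴ = sigJ p q * sharpJ A B * sigJ p q ∧ (sigJ p q * sharpJ A B).PosDef) ∧
    sharpJ A B * A⁻¹ * sharpJ A B = B ∧
    (∀ X : Matrix (Fin p ⊕ Fin q) (Fin p ⊕ Fin q) ℂ,
      Xᴴ = sigJ p q * X * sigJ p q → (sigJ p q * X).PosDef →
      X * A⁻¹ * X = B → X = sharpJ A B) := by
  set J := sigJ p q with hJdef
  have hJ2 : J * J = 1 := by
    rw [hJdef, sigJ, Matrix.fromBlocks_multiply]
    simp [← Matrix.fromBlocks_one]
  have hJH : Jᴴ = J := by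
    rw [hJdef, sigJ, Matrix.fromBlocks_conjTranspose]
    simp
  have hJJ : ∀ x : Matrix (Fin p ⊕ Fin q) (Fin p ⊕ Fin q) ℂ, J * (J * x) = x := fun x => by
    rw [← Matrix.mul_assoc, hJ2, Matrix.one_mul]
  have key : sharpJ A B = J * geo (J * A) (J * B) := by
    simp only [sharpJ, Jpow, mpow, geo, ← hJdef]
    simp only [Matrix.mul_assoc, hJJ]
  set G := geo (J * A) (J * B) with hG
  have hGpos : G.PosDef := geo_posDef hposA hposB
  have hJinv : J⁻¹ = J := Matrix.inv_eq_right_inv hJ2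
  have hAinv : A⁻¹ = (J * A)⁻¹ * J := by
    calc A⁻¹ = (J * (J * A))⁻¹ := by rw [hJJ]
      _ = (J * A)⁻¹ * J⁻¹ := Matrix.mul_inv_rev _ _
      _ = (J * A)⁻¹ * J := by rw [hJinv]
  refine ⟨⟨?_, ?_⟩, ?_, ?_⟩
  · rw [key, Matrix.conjTranspose_mul, hJH, hGpos.isHermitian.eq, hJJ]
  · rw [key, hJJ]; exact hGpos
  · calc sharpJ A B * A⁻¹ * sharpJ A B = J * (G * ((J * A)⁻¹ * G)) := by
          rw [key, hAinv]; simp only [Matrix.mul_assoc, hJJ]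
      _ = J * (G * (J * A)⁻¹ * G) := by simp only [Matrix.mul_assoc]
      _ = J * (J * B) := by
          rw [show G * (J * A)⁻¹ * G = J * B from geo_riccati hposA hposB]
      _ = B := hJJ B
  · intro X hXH hXpos hXric
    have hricJ : (J * X) * (J * A)⁻¹ * (J * X) = J * B := by
      rw [← hXric, hAinv]
      simp only [Matrix.mul_assoc]
    have hXG : J * X = G := geo_unique hposA hposB hXpos hricJ
    calc X = J * (J * X) := (hJJ X).symm
      _ = J * G := by rw [hXG]
      _ = sharpJ A B := key.symm
end
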